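/- The quotient of SL(2, ℤ) by its center {±I} (i.e., the group PSL(2, ℤ)) is isomorphic, as a group, to the free product of a cyclic group of order 2 and a cyclic group of order 3. -/

import Mathlib

open Matrix UpperHalfPlane ModularGroup Subgroup Pointwise
open scoped MatrixGroups

namespace PSL2ZAux

local notation "SL2Z" => Matrix.SpecialLinearGroup (Fin 2) ℤ

/-- The matrix `U = [[0,1],[-1,1]]` of order 6 in `SL(2,ℤ)`, order 3 in `PSL(2,ℤ)`. -/
def U : SL(2, ℤ) := ⟨!![0, 1; -1, 1], by norm_num [Matrix.det_fin_two_of]⟩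

lemma coe_U : (U : Matrix (Fin 2) (Fin 2) ℤ) = !![0, 1; -1, 1] := rfl

lemma S_mul_S : S * S = -1 := by
  ext i j
  fin_cases i <;> fin_cases j <;> simp [coe_S, Matrix.mul_fin_two]

lemma S_mul_U : S * U = T⁻¹ := by
  ext i j
  fin_cases i <;> fin_cases j <;>
    simp [coe_S, coe_U, coe_T, Matrix.mul_fin_two, Matrix.adjugate_fin_two,
      Matrix.SpecialLinearGroup.coe_inv]

lemma U_eq : U = -(S * T⁻¹) := by
  ext i j
  fin_cases i <;> fin_cases j <;>
    simp [coe_S, coe_U, coe_T, Matrix.mul_fin_two, Matrix.adjugate_fin_two,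
      Matrix.SpecialLinearGroup.coe_inv]

lemma U_mul_U : U * U = -(T * S) := by
  ext i j
  fin_cases i <;> fin_cases j <;> simp [coe_S, coe_U, coe_T, Matrix.mul_fin_two]

lemma U_cube : U * U * U = -1 := by
  ext i j
  fin_cases i <;> fin_cases j <;> simp [coe_S, coe_U, Matrix.mul_fin_two]

lemma neg_one_mem_center : (-1 : SL(2,ℤ)) ∈ center SL2Z := by
  rw [Subgroup.mem_center_iff]; intro g; simp

lemma eq_one_or_neg_one_of_mem_center {A : SL(2,ℤ)} (hA : A ∈ center SL2Z) :
    A = 1 ∨ A = -1 := by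
  obtain ⟨r, hr, hrA⟩ := Matrix.SpecialLinearGroup.mem_center_iff.mp hA
  rcases Int.isUnit_iff.mp (IsUnit.of_mul_eq_one r (by simpa [sq, Fintype.card_fin] using hr))
    with h | h
  · left; ext i j
    rw [← hrA]; subst h; simp
  · right; ext i j
    rw [← hrA]; subst h
    fin_cases i <;> fin_cases j <;> simp [Matrix.scalar_apply]

lemma center_le_ker : center SL2Z ≤ (MulAction.toPermHom SL2Z ℍ).ker := by
  intro A hA
  rcases eq_one_or_neg_one_of_mem_center hA with rfl | rfl
  · exact (MulAction.toPermHom SL2Z ℍ).map_one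
  · rw [MonoidHom.mem_ker]
    ext z
    simpa using ModularGroup.SL_neg_smul 1 z

/-- The action of `PSL(2,ℤ)` on the upper half plane, induced from that of `SL(2,ℤ)`. -/
noncomputable def pslPerm : SL2Z ⧸ center SL2Z →* Equiv.Perm ℍ :=
  QuotientGroup.lift _ (MulAction.toPermHom SL2Z ℍ) center_le_ker

noncomputable instance : MulAction (SL2Z ⧸ center SL2Z) ℍ := MulAction.compHom ℍ pslPerm

lemma mk_smul (A : SL(2,ℤ)) (z : ℍ) :
    (QuotientGroup.mk A : SL2Z ⧸ center SL2Z) • z = A • z := rfl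

noncomputable abbrev s : SL2Z ⧸ center SL2Z := QuotientGroup.mk S
noncomputable abbrev u : SL2Z ⧸ center SL2Z := QuotientGroup.mk U

lemma s_sq : s * s = 1 := by
  rw [← QuotientGroup.mk_mul, S_mul_S, QuotientGroup.eq_one_iff]
  exact neg_one_mem_center

lemma u_cube' : u * u * u = 1 := by
  rw [← QuotientGroup.mk_mul, ← QuotientGroup.mk_mul, U_cube, QuotientGroup.eq_one_iff]
  exact neg_one_mem_center

/-- The homomorphism `C₂ → PSL(2,ℤ)` sending the generator to `[S]`. -/
noncomputable def fS : Multiplicative (ZMod 2) →* SL2Z ⧸ center SL2Z :=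
  AddMonoidHom.toMultiplicativeLeft
    (ZMod.lift 2 ⟨zmultiplesHom (Additive (SL2Z ⧸ center SL2Z)) (Additive.ofMul s), by
      show ((2 : ℤ) • Additive.ofMul s) = 0
      rw [two_zsmul, ← ofMul_mul, s_sq]; rfl⟩)

/-- The homomorphism `C₃ → PSL(2,ℤ)` sending the generator to `[U]`. -/
noncomputable def fU : Multiplicative (ZMod 3) →* SL2Z ⧸ center SL2Z :=
  AddMonoidHom.toMultiplicativeLeft
    (ZMod.lift 3 ⟨zmultiplesHom (Additive (SL2Z ⧸ center SL2Z)) (Additive.ofMul u), by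
      show ((3 : ℤ) • Additive.ofMul u) = 0
      rw [show (3:ℤ) = 2 + 1 by norm_num, add_zsmul, two_zsmul, one_zsmul,
        ← ofMul_mul, ← ofMul_mul, u_cube']; rfl⟩)

lemma fS_apply_one : fS (Multiplicative.ofAdd (1 : ZMod 2)) = s := by
  have h : ((1 : ZMod 2)) = ((1 : ℤ) : ZMod 2) := by norm_num
  unfold fS
  rw [AddMonoidHom.coe_toMultiplicativeLeft]
  simp only [Function.comp_apply]
  simp only [toAdd_ofAdd]
  rw [h, ZMod.lift_coe]
  show ((1:ℤ) • Additive.ofMul s).toMul = s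
  simp

lemma fU_apply_one : fU (Multiplicative.ofAdd (1 : ZMod 3)) = u := by
  have h : ((1 : ZMod 3)) = ((1 : ℤ) : ZMod 3) := by norm_num
  unfold fU
  rw [AddMonoidHom.coe_toMultiplicativeLeft]
  simp only [Function.comp_apply]
  simp only [toAdd_ofAdd]
  rw [h, ZMod.lift_coe]
  show ((1:ℤ) • Additive.ofMul u).toMul = u
  simp

lemma fU_apply_two : fU (Multiplicative.ofAdd (2 : ZMod 3)) = u * u := by
  have h : ((2 : ZMod 3)) = ((2 : ℤ) : ZMod 3) := by norm_num
  unfold fU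
  rw [AddMonoidHom.coe_toMultiplicativeLeft]
  simp only [Function.comp_apply]
  simp only [toAdd_ofAdd]
  rw [h, ZMod.lift_coe]
  show ((2:ℤ) • Additive.ofMul u).toMul = u * u
  rw [two_zsmul, ← ofMul_mul]; rfl

/-! ### Generation of `SL(2,ℤ)` by `S` and `T` -/

lemma closure_ST (A : SL(2, ℤ)) : A ∈ Subgroup.closure ({S, T} : Set SL(2, ℤ)) := by
  have hS : S ∈ Subgroup.closure ({S, T} : Set SL(2, ℤ)) := Subgroup.subset_closure (by simp)
  have hT : T ∈ Subgroup.closure ({S, T} : Set SL(2, ℤ)) := Subgroup.subset_closure (by simp)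
  generalize hn : (A.1 1 0).natAbs = n
  induction n using Nat.strong_induction_on generalizing A with
  | _ n ih =>
  by_cases hc : A.1 1 0 = 0
  · have hdet : A.1 0 0 * A.1 1 1 - A.1 0 1 * A.1 1 0 = 1 := by
      rw [← Matrix.det_fin_two]; exact A.2
    rw [hc, mul_zero, sub_zero] at hdet
    rcases Int.eq_one_or_neg_one_of_mul_eq_one' hdet with ⟨h1, h2⟩ | ⟨h1, h2⟩
    · have : A = T ^ (A.1 0 1) := by
        apply Subtype.ext
        rw [coe_T_zpow]
        conv_lhs => rw [Matrix.eta_fin_two A.1]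
        rw [hc, h1, h2]
      rw [this]; exact zpow_mem hT _
    · have : A = S * S * T ^ (-(A.1 0 1)) := by
        apply Subtype.ext
        rw [Matrix.SpecialLinearGroup.coe_mul, Matrix.SpecialLinearGroup.coe_mul, coe_T_zpow]
        conv_lhs => rw [Matrix.eta_fin_two A.1]
        rw [hc, h1, h2]
        simp [S, Matrix.mul_fin_two]
      rw [this]; exact mul_mem (mul_mem hS hS) (zpow_mem hT _)
  · set a := A.1 0 0 with ha
    set c := A.1 1 0 with hcdef
    set q := a / c with hq
    set B := S * (T ^ (-q) * A) with hB
    have hBc : B.1 1 0 = a % c := by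
      have h2 : (B.1 : Matrix (Fin 2) (Fin 2) ℤ) = S.1 * (!![1, -q; 0, 1] * A.1) := by
        rw [hB, Matrix.SpecialLinearGroup.coe_mul, Matrix.SpecialLinearGroup.coe_mul, coe_T_zpow]
      rw [h2]
      conv_lhs => rw [Matrix.eta_fin_two A.1]
      simp [S, Matrix.mul_fin_two, Int.emod_def]
      ring
    have hlt : (B.1 1 0).natAbs < n := by
      rw [hBc, ← hn]
      have h1 : 0 ≤ a % c := Int.emod_nonneg a hc
      have h2 : a % c < |c| := by
        have := Int.emod_lt_of_pos a (abs_pos.mpr hc)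
        rwa [Int.emod_abs] at this
      have := Int.natAbs_lt_natAbs_of_nonneg_of_lt h1 h2
      rwa [Int.natAbs_abs] at this
    have hBmem : B ∈ Subgroup.closure ({S, T} : Set SL(2, ℤ)) := ih _ hlt B rfl
    have : A = T ^ q * (S⁻¹ * B) := by rw [hB]; group
    rw [this]
    exact mul_mem (zpow_mem hT q) (mul_mem (inv_mem hS) hBmem)

/-! ### Ping-pong geometry on the upper half plane -/

lemma normSq_pos' (z : ℍ) : 0 < Complex.normSq (z : ℂ) :=
  Complex.normSq_pos.mpr z.ne_zero

lemma reS_smul (z : ℍ) : (S • z).re = -z.re / Complex.normSq (z : ℂ) := by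
  rw [modular_S_smul]
  show ((-(z:ℂ))⁻¹).re = _
  rw [Complex.inv_re]
  simp [Complex.normSq_neg, neg_div]

lemma reT_smul (z : ℍ) : (T • z).re = z.re + 1 := by
  rw [modular_T_smul]
  show ((1:ℝ) + (z:ℂ)).re = z.re + 1
  simp [add_comm]

lemma reT_inv_smul (z : ℍ) : (T⁻¹ • z).re = z.re - 1 := by
  have h := reT_smul (T⁻¹ • z)
  rw [← mul_smul, mul_inv_cancel, one_smul] at h
  linarith

lemma S_smul_neg_of_pos {z : ℍ} (h : 0 < z.re) : (S • z).re < 0 := by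
  rw [reS_smul]
  exact div_neg_of_neg_of_pos (by linarith) (normSq_pos' z)

lemma S_smul_pos_of_neg {z : ℍ} (h : z.re < 0) : 0 < (S • z).re := by
  rw [reS_smul]
  exact div_pos (by linarith) (normSq_pos' z)

lemma U_smul_pos_of_neg {z : ℍ} (h : z.re < 0) : 0 < (U • z).re := by
  have hUz : U • z = S • (T⁻¹ • z) := by
    rw [U_eq, ModularGroup.SL_neg_smul, mul_smul]
  rw [hUz]
  exact S_smul_pos_of_neg (by rw [reT_inv_smul]; linarith)

lemma U_sq_smul_pos_of_neg {z : ℍ} (h : z.re < 0) : 0 < ((U * U) • z).re := by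
  have hUz : (U * U) • z = T • (S • z) := by
    rw [U_mul_U, ModularGroup.SL_neg_smul, mul_smul]
  rw [hUz, reT_smul]
  have := S_smul_pos_of_neg h
  linarith

/-! ### The ping-pong setup -/

def Hfam : Bool → Type := fun b => match b with
  | false => Multiplicative (ZMod 2)
  | true => Multiplicative (ZMod 3)

instance : ∀ b, Group (Hfam b) := fun b => match b with
  | false => inferInstanceAs (Group (Multiplicative (ZMod 2)))
  | true => inferInstanceAs (Group (Multiplicative (ZMod 3)))

noncomputable def ffam : ∀ b, Hfam b →* SL2Z ⧸ center SL2Z := fun b => match b with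
  | false => fS
  | true => fU

def Xfam : Bool → Set ℍ := fun b => match b with
  | false => {z : ℍ | z.re < 0}
  | true => {z : ℍ | 0 < z.re}

lemma hXnonempty : ∀ b, (Xfam b).Nonempty := by
  intro b
  cases b
  · exact ⟨UpperHalfPlane.mk ⟨-1, 1⟩ (by show (0:ℝ) < 1; norm_num),
      by show (-1:ℝ) < 0; norm_num⟩
  · exact ⟨UpperHalfPlane.mk ⟨1, 1⟩ (by show (0:ℝ) < 1; norm_num),
      by show (0:ℝ) < 1; norm_num⟩

lemma hXdisj : Pairwise (Function.onFun Disjoint Xfam) := by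
  have key : ∀ z : ℍ, z ∈ Xfam false → z ∈ Xfam true → False := fun z h1 h2 =>
    absurd ((show z.re < 0 from h1).trans (show 0 < z.re from h2)) (lt_irrefl _)
  intro i j hij
  cases i <;> cases j
  · exact absurd rfl hij
  · exact Set.disjoint_left.mpr fun {z} h1 h2 => key z h1 h2
  · exact Set.disjoint_left.mpr fun {z} h1 h2 => key z h2 h1
  · exact absurd rfl hij

lemma hpp : Pairwise fun i j => ∀ h : Hfam i, h ≠ 1 → ffam i h • Xfam j ⊆ Xfam i := by
  have h2 : ∀ h : Multiplicative (ZMod 2), h ≠ 1 → h = Multiplicative.ofAdd 1 := by decide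
  have h3 : ∀ h : Multiplicative (ZMod 3), h ≠ 1 →
      h = Multiplicative.ofAdd 1 ∨ h = Multiplicative.ofAdd 2 := by decide
  intro i j hij
  cases i <;> cases j
  · exact absurd rfl hij
  · -- i = false, j = true : S
    show ∀ h : Multiplicative (ZMod 2), h ≠ 1 → fS h • Xfam true ⊆ Xfam false
    intro h hh
    rw [h2 h hh, fS_apply_one]
    rintro x ⟨z, hz, rfl⟩
    show (s • z).re < 0
    rw [mk_smul]
    exact S_smul_neg_of_pos hz
  · -- i = true, j = false : U, U²
    show ∀ h : Multiplicative (ZMod 3), h ≠ 1 → fU h • Xfam false ⊆ Xfam true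
    intro h hh
    rcases h3 h hh with rfl | rfl
    · rw [fU_apply_one]
      rintro x ⟨z, hz, rfl⟩
      show 0 < (u • z).re
      rw [mk_smul]
      exact U_smul_pos_of_neg hz
    · rw [fU_apply_two]
      rintro x ⟨z, hz, rfl⟩
      show 0 < ((u * u) • z).re
      rw [← QuotientGroup.mk_mul, mk_smul]
      exact U_sq_smul_pos_of_neg hz
  · exact absurd rfl hij

lemma hcard : 3 ≤ Cardinal.mk Bool ∨ ∃ i, 3 ≤ Cardinal.mk (Hfam i) := by
  right
  refine ⟨true, ?_⟩
  show (3 : Cardinal) ≤ Cardinal.mk (Multiplicative (ZMod 3))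
  rw [Cardinal.mk_fintype]; simp

noncomputable def liftF : Monoid.CoprodI Hfam →* SL2Z ⧸ center SL2Z := Monoid.CoprodI.lift ffam

lemma liftF_injective : Function.Injective liftF :=
  Monoid.CoprodI.lift_injective_of_ping_pong ffam hcard Xfam hXnonempty hXdisj hpp

/-! ### Relating the binary coproduct to the indexed coproduct -/

noncomputable def e : Monoid.Coprod (Multiplicative (ZMod 2)) (Multiplicative (ZMod 3)) →*
    Monoid.CoprodI Hfam :=
  Monoid.Coprod.lift (Monoid.CoprodI.of (M := Hfam) (i := false))
    (Monoid.CoprodI.of (M := Hfam) (i := true))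

noncomputable def r : Monoid.CoprodI Hfam →*
    Monoid.Coprod (Multiplicative (ZMod 2)) (Multiplicative (ZMod 3)) :=
  Monoid.CoprodI.lift (fun b => match b with
    | false => Monoid.Coprod.inl
    | true => Monoid.Coprod.inr)

lemma e_inl (x : Multiplicative (ZMod 2)) :
    e (Monoid.Coprod.inl x) = Monoid.CoprodI.of (M := Hfam) (i := false) x := rfl

lemma e_inr (x : Multiplicative (ZMod 3)) :
    e (Monoid.Coprod.inr x) = Monoid.CoprodI.of (M := Hfam) (i := true) x := rfl

lemma r_comp_e : r.comp e = MonoidHom.id _ := by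
  refine Monoid.Coprod.hom_ext ?_ ?_ <;> refine MonoidHom.ext fun x => ?_ <;>
      simp only [MonoidHom.comp_apply, MonoidHom.id_apply]
  · show r (e (Monoid.Coprod.inl x)) = Monoid.Coprod.inl x
    rw [e_inl, r]
    exact Monoid.CoprodI.lift_of _ _
  · show r (e (Monoid.Coprod.inr x)) = Monoid.Coprod.inr x
    rw [e_inr, r]
    exact Monoid.CoprodI.lift_of _ _

lemma e_injective : Function.Injective e :=
  Function.LeftInverse.injective (g := r) fun x => DFunLike.congr_fun r_comp_e x

/-! ### The final homomorphism -/

noncomputable def Ψ : Monoid.Coprod (Multiplicative (ZMod 2)) (Multiplicative (ZMod 3)) →*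
    SL2Z ⧸ center SL2Z :=
  liftF.comp e

lemma Ψ_injective : Function.Injective Ψ := liftF_injective.comp e_injective

lemma mk_S_mem : (QuotientGroup.mk S : SL2Z ⧸ center SL2Z) ∈ Ψ.range := by
  refine ⟨Monoid.Coprod.inl (Multiplicative.ofAdd (1 : ZMod 2)), ?_⟩
  show liftF (e (Monoid.Coprod.inl _)) = _
  rw [e_inl, liftF]
  refine Eq.trans ?_ fS_apply_one
  exact Monoid.CoprodI.lift_of _ _

lemma mk_U_mem : (QuotientGroup.mk U : SL2Z ⧸ center SL2Z) ∈ Ψ.range := by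
  refine ⟨Monoid.Coprod.inr (Multiplicative.ofAdd (1 : ZMod 3)), ?_⟩
  show liftF (e (Monoid.Coprod.inr _)) = _
  rw [e_inr, liftF]
  refine Eq.trans ?_ fU_apply_one
  exact Monoid.CoprodI.lift_of _ _

lemma mk_T_mem : (QuotientGroup.mk T : SL2Z ⧸ center SL2Z) ∈ Ψ.range := by
  have key : (QuotientGroup.mk T : SL2Z ⧸ center SL2Z)⁻¹ =
      QuotientGroup.mk S * QuotientGroup.mk U := by
    rw [← QuotientGroup.mk_mul, S_mul_U, QuotientGroup.mk_inv]
  have hT : (QuotientGroup.mk T : SL2Z ⧸ center SL2Z) =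
      (QuotientGroup.mk S * QuotientGroup.mk U : SL2Z ⧸ center SL2Z)⁻¹ := by
    rw [← key, inv_inv]
  rw [hT]
  exact inv_mem (mul_mem mk_S_mem mk_U_mem)

lemma Ψ_surjective : Function.Surjective Ψ := by
  intro p
  obtain ⟨A, rfl⟩ := QuotientGroup.mk_surjective p
  suffices h : (QuotientGroup.mk A : SL2Z ⧸ center SL2Z) ∈ Ψ.range by exact h
  refine Subgroup.closure_induction (k := ({S, T} : Set SL(2,ℤ)))
    (p := fun A _ => (QuotientGroup.mk A : SL2Z ⧸ center SL2Z) ∈ Ψ.range)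
    ?_ ?_ ?_ ?_ (closure_ST A)
  · rintro x (rfl | rfl)
    · exact mk_S_mem
    · exact mk_T_mem
  · exact ⟨1, map_one Ψ⟩
  · intro x y _ _ hx hy
    rw [QuotientGroup.mk_mul]
    exact mul_mem hx hy
  · intro x _ hx
    rw [QuotientGroup.mk_inv]
    exact inv_mem hx

end PSL2ZAux

/-- The quotient of `SL(2, ℤ)` by its center `{±I}`, i.e. the group `PSL(2, ℤ)`,
is isomorphic to the free product of a cyclic group of order 2 and a cyclic group
of order 3. -/
theorem psl2z_iso_coprod_c2_c3 :
    Nonempty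
      ((Matrix.SpecialLinearGroup (Fin 2) ℤ ⧸
          Subgroup.center (Matrix.SpecialLinearGroup (Fin 2) ℤ)) ≃*
        Monoid.Coprod (Multiplicative (ZMod 2)) (Multiplicative (ZMod 3))) := by
  exact ⟨(MulEquiv.ofBijective PSL2ZAux.Ψ ⟨PSL2ZAux.Ψ_injective, PSL2ZAux.Ψ_surjective⟩).symm⟩
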